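/- arXiv:1705.05734 — 5 statements merged into one kernel-verified Lean document; each statement's English description precedes it below -/
import Mathlib

section
/- Let k be a field and let U, V be k-vector spaces equipped with linear maps b : k → U ⊗ V and d : V ⊗ U → k satisfying the Zorro moves. Then V is finite-dimensional over k (and likewise U is finite-dimensional). -/
open TensorProduct

/-- If `b : k → U ⊗ V` and `d : V ⊗ U → k` satisfy the Zorro moves,
then `V` (and likewise `U`) is finite-dimensional over `k`. -/
theorem dual_pair_finiteDimensional
    (k U V : Type*) [Field k] [AddCommGroup U] [Module k U]
    [AddCommGroup V] [Module k V]
    (b : k →ₗ[k] U ⊗[k] V) (d : V ⊗[k] U →ₗ[k] k)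
    (zorroV :
      (TensorProduct.lid k V).toLinearMap ∘ₗ LinearMap.rTensor V d ∘ₗ
        (TensorProduct.assoc k V U V).symm.toLinearMap ∘ₗ LinearMap.lTensor V b ∘ₗ
        (TensorProduct.rid k V).symm.toLinearMap = LinearMap.id)
    (zorroU :
      (TensorProduct.rid k U).toLinearMap ∘ₗ LinearMap.lTensor U d ∘ₗ
        (TensorProduct.assoc k U V U).toLinearMap ∘ₗ LinearMap.rTensor U b ∘ₗ
        (TensorProduct.lid k U).symm.toLinearMap = LinearMap.id) :
    FiniteDimensional k V ∧ FiniteDimensional k U := by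
  classical
  obtain ⟨S, hS⟩ := TensorProduct.exists_finset (b 1)
  constructor
  · have key : ∀ v : V, v = ∑ p ∈ S, d (v ⊗ₜ p.1) • p.2 := by
      intro v
      have hv := LinearMap.ext_iff.mp zorroV v
      simp only [LinearMap.comp_apply, LinearEquiv.coe_coe, TensorProduct.rid_symm_apply,
        LinearMap.lTensor_tmul, hS, TensorProduct.tmul_sum, map_sum,
        TensorProduct.assoc_symm_tmul, LinearMap.rTensor_tmul, TensorProduct.lid_tmul,
        LinearMap.id_coe, id_eq] at hv
      exact hv.symm
    refine ⟨⟨S.image Prod.snd, ?_⟩⟩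
    rw [eq_top_iff]
    intro v _
    rw [key v]
    exact Submodule.sum_mem _ fun p hp =>
      Submodule.smul_mem _ _ (Submodule.subset_span (by
        simp only [Finset.coe_image]; exact Set.mem_image_of_mem _ hp))
  · have key : ∀ u : U, u = ∑ p ∈ S, d (p.2 ⊗ₜ u) • p.1 := by
      intro u
      have hu := LinearMap.ext_iff.mp zorroU u
      simp only [LinearMap.comp_apply, LinearEquiv.coe_coe, TensorProduct.lid_symm_apply,
        LinearMap.rTensor_tmul, hS, TensorProduct.sum_tmul, map_sum,
        TensorProduct.assoc_tmul, LinearMap.lTensor_tmul, TensorProduct.rid_tmul,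
        LinearMap.id_coe, id_eq] at hu
      exact hu.symm
    refine ⟨⟨S.image Prod.fst, ?_⟩⟩
    rw [eq_top_iff]
    intro u _
    rw [key u]
    exact Submodule.sum_mem _ fun p hp =>
      Submodule.smul_mem _ _ (Submodule.subset_span (by
        simp only [Finset.coe_image]; exact Set.mem_image_of_mem _ hp))
end

section
/- Let k be a field and let U, V be k-vector spaces equipped with linear maps b : k → U ⊗ V and d : V ⊗ U → k satisfying the Zorro moves. Then the linear map V → Hom_k(U, k) sending v to the functional u ↦ d(v ⊗ u) is bijective, i.e. V is linearly isomorphic to the dual space U*. -/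
open TensorProduct

/-- If `b : k → U ⊗ V` and `d : V ⊗ U → k` satisfy the Zorro moves,
then the map `V → Hom_k(U, k)`, `v ↦ (u ↦ d (v ⊗ u))`, is bijective, i.e. `V ≅ U*`. -/
theorem dual_pair_iso_dual
    (k U V : Type*) [Field k] [AddCommGroup U] [Module k U]
    [AddCommGroup V] [Module k V]
    (b : k →ₗ[k] U ⊗[k] V) (d : V ⊗[k] U →ₗ[k] k)
    (zorroV :
      (TensorProduct.lid k V).toLinearMap ∘ₗ LinearMap.rTensor V d ∘ₗ
        (TensorProduct.assoc k V U V).symm.toLinearMap ∘ₗ LinearMap.lTensor V b ∘ₗ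
        (TensorProduct.rid k V).symm.toLinearMap = LinearMap.id)
    (zorroU :
      (TensorProduct.rid k U).toLinearMap ∘ₗ LinearMap.lTensor U d ∘ₗ
        (TensorProduct.assoc k U V U).toLinearMap ∘ₗ LinearMap.rTensor U b ∘ₗ
        (TensorProduct.lid k U).symm.toLinearMap = LinearMap.id) :
    Function.Bijective (TensorProduct.curry d) := by
  set g : (U →ₗ[k] k) → V := fun f => (TensorProduct.lid k V) (f.rTensor V (b 1)) with hg
  have gen1 : ∀ (v : V) (t : U ⊗[k] V),
      (TensorProduct.lid k V) ((TensorProduct.curry d v).rTensor V t) =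
      (TensorProduct.lid k V)
        ((LinearMap.rTensor V d) ((TensorProduct.assoc k V U V).symm (v ⊗ₜ[k] t))) := by
    intro v t
    induction t using TensorProduct.induction_on with
    | zero => simp
    | tmul u w => simp
    | add x y hx hy => simp only [tmul_add, map_add, hx, hy]
  have gen2 : ∀ (f : U →ₗ[k] k) (u : U) (t : U ⊗[k] V),
      d (((TensorProduct.lid k V) ((LinearMap.rTensor V f) t)) ⊗ₜ[k] u) =
      f ((TensorProduct.rid k U)
        ((LinearMap.lTensor U d) ((TensorProduct.assoc k U V U) (t ⊗ₜ[k] u)))) := by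
    intro f u t
    induction t using TensorProduct.induction_on with
    | zero => simp
    | tmul u' w =>
        simp only [LinearMap.rTensor_tmul, lid_tmul, assoc_tmul, LinearMap.lTensor_tmul,
          rid_tmul, map_smul, smul_eq_mul]
        rw [← TensorProduct.smul_tmul', map_smul, smul_eq_mul, mul_comm]
    | add x y hx hy => simp only [add_tmul, map_add, hx, hy]
  have key1 : ∀ v : V, g (TensorProduct.curry d v) = v := by
    intro v
    have hz := LinearMap.congr_fun zorroV v
    simp only [LinearMap.comp_apply, LinearMap.id_apply, LinearEquiv.coe_coe,
      TensorProduct.rid_symm_apply, LinearMap.lTensor_tmul] at hz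
    rw [hg]
    exact (gen1 v (b 1)).trans hz
  have key2 : ∀ f : U →ₗ[k] k, TensorProduct.curry d (g f) = f := by
    intro f
    ext u
    have hz := LinearMap.congr_fun zorroU u
    simp only [LinearMap.comp_apply, LinearMap.id_apply, LinearEquiv.coe_coe,
      TensorProduct.lid_symm_apply, LinearMap.rTensor_tmul] at hz
    simp only [TensorProduct.curry_apply, hg]
    rw [gen2 f u (b 1), hz]
  exact Function.bijective_iff_has_inverse.mpr ⟨g, key1, key2⟩
end

section
/- Let k be a field. Let (U, V, b, d) and (U', V', b', d') be dual pairs of k-vector spaces, i.e. b : k → U ⊗ V, d : V ⊗ U → k and b' : k → U' ⊗ V', d' : V' ⊗ U' → k each satisfy the Zorro moves. Suppose f : U → U' and g : V → V' are linear maps such that (f ⊗ g) ∘ b = b' and d' ∘ (g ⊗ f) = d. Then f and g are bijective. -/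
open TensorProduct

lemma zorroV_elem {k U V ι : Type*} [Field k]
    [AddCommGroup U] [Module k U] [AddCommGroup V] [Module k V]
    (b : k →ₗ[k] U ⊗[k] V) (d : V ⊗[k] U →ₗ[k] k)
    (zorroV :
      (TensorProduct.lid k V).toLinearMap ∘ₗ LinearMap.rTensor V d ∘ₗ
        (TensorProduct.assoc k V U V).symm.toLinearMap ∘ₗ LinearMap.lTensor V b ∘ₗ
        (TensorProduct.rid k V).symm.toLinearMap = LinearMap.id)
    (s : Finset ι) (uu : ι → U) (vv : ι → V)
    (hs : b 1 = ∑ i ∈ s, uu i ⊗ₜ[k] vv i) (v : V) :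
    ∑ i ∈ s, d (v ⊗ₜ[k] uu i) • vv i = v := by
  have h := LinearMap.congr_fun zorroV v
  simp only [LinearMap.comp_apply, LinearEquiv.coe_coe, rid_symm_apply,
    LinearMap.lTensor_tmul, hs, tmul_sum, map_sum, assoc_symm_tmul,
    LinearMap.rTensor_tmul, lid_tmul, LinearMap.id_apply] at h
  exact h

lemma zorroU_elem {k U V ι : Type*} [Field k]
    [AddCommGroup U] [Module k U] [AddCommGroup V] [Module k V]
    (b : k →ₗ[k] U ⊗[k] V) (d : V ⊗[k] U →ₗ[k] k)
    (zorroU :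
      (TensorProduct.rid k U).toLinearMap ∘ₗ LinearMap.lTensor U d ∘ₗ
        (TensorProduct.assoc k U V U).toLinearMap ∘ₗ LinearMap.rTensor U b ∘ₗ
        (TensorProduct.lid k U).symm.toLinearMap = LinearMap.id)
    (s : Finset ι) (uu : ι → U) (vv : ι → V)
    (hs : b 1 = ∑ i ∈ s, uu i ⊗ₜ[k] vv i) (u : U) :
    ∑ i ∈ s, d (vv i ⊗ₜ[k] u) • uu i = u := by
  have h := LinearMap.congr_fun zorroU u
  simp only [LinearMap.comp_apply, LinearEquiv.coe_coe, lid_symm_apply,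
    LinearMap.rTensor_tmul, hs, sum_tmul, map_sum, assoc_tmul,
    LinearMap.lTensor_tmul, rid_tmul, LinearMap.id_apply] at h
  exact h

/-- A morphism `(f, g)` between dual pairs `(U, V, b, d)` and
`(U', V', b', d')` (i.e. `(f ⊗ g) ∘ b = b'` and `d' ∘ (g ⊗ f) = d`)
is automatically invertible: `f` and `g` are bijective. -/
theorem dual_pair_morphism_bijective
    (k U V U' V' : Type*) [Field k]
    [AddCommGroup U] [Module k U] [AddCommGroup V] [Module k V]
    [AddCommGroup U'] [Module k U'] [AddCommGroup V'] [Module k V']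
    (b : k →ₗ[k] U ⊗[k] V) (d : V ⊗[k] U →ₗ[k] k)
    (b' : k →ₗ[k] U' ⊗[k] V') (d' : V' ⊗[k] U' →ₗ[k] k)
    (zorroV :
      (TensorProduct.lid k V).toLinearMap ∘ₗ LinearMap.rTensor V d ∘ₗ
        (TensorProduct.assoc k V U V).symm.toLinearMap ∘ₗ LinearMap.lTensor V b ∘ₗ
        (TensorProduct.rid k V).symm.toLinearMap = LinearMap.id)
    (zorroU :
      (TensorProduct.rid k U).toLinearMap ∘ₗ LinearMap.lTensor U d ∘ₗ
        (TensorProduct.assoc k U V U).toLinearMap ∘ₗ LinearMap.rTensor U b ∘ₗ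
        (TensorProduct.lid k U).symm.toLinearMap = LinearMap.id)
    (zorroV' :
      (TensorProduct.lid k V').toLinearMap ∘ₗ LinearMap.rTensor V' d' ∘ₗ
        (TensorProduct.assoc k V' U' V').symm.toLinearMap ∘ₗ LinearMap.lTensor V' b' ∘ₗ
        (TensorProduct.rid k V').symm.toLinearMap = LinearMap.id)
    (zorroU' :
      (TensorProduct.rid k U').toLinearMap ∘ₗ LinearMap.lTensor U' d' ∘ₗ
        (TensorProduct.assoc k U' V' U').toLinearMap ∘ₗ LinearMap.rTensor U' b' ∘ₗ
        (TensorProduct.lid k U').symm.toLinearMap = LinearMap.id)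
    (f : U →ₗ[k] U') (g : V →ₗ[k] V')
    (hb : TensorProduct.map f g ∘ₗ b = b')
    (hd : d' ∘ₗ TensorProduct.map g f = d) :
    Function.Bijective f ∧ Function.Bijective g := by
  obtain ⟨s, hs⟩ := TensorProduct.exists_finset (b 1)
  have hs1 : b 1 = ∑ p ∈ s, (fun p : U × V => p.1) p ⊗ₜ[k] (fun p : U × V => p.2) p := hs
  have hs' : b' 1 = ∑ p ∈ s, (fun p : U × V => f p.1) p ⊗ₜ[k] (fun p : U × V => g p.2) p := by
    rw [← hb]
    simp [hs, map_sum]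
  have hd' : ∀ (v : V) (u : U), d' (g v ⊗ₜ[k] f u) = d (v ⊗ₜ[k] u) := by
    intro v u
    simpa using LinearMap.congr_fun hd (v ⊗ₜ[k] u)
  constructor
  · refine Function.bijective_iff_has_inverse.mpr
      ⟨fun u' => ∑ p ∈ s, d' (g p.2 ⊗ₜ[k] u') • p.1, fun u => ?_, fun u' => ?_⟩
    · simp only [hd']
      exact zorroU_elem b d zorroU s _ _ hs1 u
    · rw [map_sum]
      simp only [map_smul]
      exact zorroU_elem b' d' zorroU' s _ _ hs' u'
  · refine Function.bijective_iff_has_inverse.mpr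
      ⟨fun v' => ∑ p ∈ s, d' (v' ⊗ₜ[k] f p.1) • p.2, fun v => ?_, fun v' => ?_⟩
    · simp only [hd']
      exact zorroV_elem b d zorroV s _ _ hs1 v
    · rw [map_sum]
      simp only [map_smul]
      exact zorroV_elem b' d' zorroV' s _ _ hs' v'
end

section
/- Let A be a Frobenius algebra over a field k in the full sense, with multiplication μ, coproduct Δ and counit ε. Then A is finite-dimensional as a k-vector space. -/
open TensorProduct

/-- A Frobenius algebra `(A, μ, Δ, ε)` (full definition) over a field
is finite-dimensional. -/
theorem frobenius_finiteDimensional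
    (k A : Type*) [Field k] [Ring A] [Algebra k A]
    (Δ : A →ₗ[k] A ⊗[k] A) (ε : A →ₗ[k] k)
    (coassoc :
      (TensorProduct.assoc k A A A).toLinearMap ∘ₗ LinearMap.rTensor A Δ ∘ₗ Δ =
        LinearMap.lTensor A Δ ∘ₗ Δ)
    (counit_left :
      (TensorProduct.lid k A).toLinearMap ∘ₗ LinearMap.rTensor A ε ∘ₗ Δ = LinearMap.id)
    (counit_right :
      (TensorProduct.rid k A).toLinearMap ∘ₗ LinearMap.lTensor A ε ∘ₗ Δ = LinearMap.id)
    (frob_left :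
      LinearMap.rTensor A (LinearMap.mul' k A) ∘ₗ
          (TensorProduct.assoc k A A A).symm.toLinearMap ∘ₗ LinearMap.lTensor A Δ =
        Δ ∘ₗ LinearMap.mul' k A)
    (frob_right :
      LinearMap.lTensor A (LinearMap.mul' k A) ∘ₗ
          (TensorProduct.assoc k A A A).toLinearMap ∘ₗ LinearMap.rTensor A Δ =
        Δ ∘ₗ LinearMap.mul' k A) :
    FiniteDimensional k A := by
  classical
  obtain ⟨s, hs⟩ := TensorProduct.exists_finset (Δ 1)
  have key : ∀ a : A, a = s.sum fun p => ε (a * p.1) • p.2 := by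
    intro a
    have h1 : Δ a = s.sum fun p => (a * p.1) ⊗ₜ[k] p.2 := by
      have h := congrFun (congrArg DFunLike.coe frob_left) (a ⊗ₜ[k] (1 : A))
      simp only [LinearMap.comp_apply, LinearMap.lTensor_tmul, LinearMap.mul'_apply,
        mul_one] at h
      rw [hs] at h
      rw [← h]
      simp [TensorProduct.tmul_sum, map_sum]
    have h2 := congrFun (congrArg DFunLike.coe counit_left) a
    rw [LinearMap.comp_apply, LinearMap.comp_apply, h1] at h2
    simp only [map_sum, LinearMap.rTensor_tmul, LinearEquiv.coe_coe,
      TensorProduct.lid_tmul, LinearMap.id_coe, id_eq] at h2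
    exact h2.symm
  have hspan : Submodule.span k ((s.image Prod.snd : Finset A) : Set A) = ⊤ := by
    rw [eq_top_iff]
    intro a _
    rw [key a]
    exact Submodule.sum_mem _ fun p hp => Submodule.smul_mem _ _
      (Submodule.subset_span (Finset.mem_coe.2 (Finset.mem_image_of_mem _ hp)))
  exact ⟨⟨s.image Prod.snd, hspan⟩⟩
end

section
/- Let k be a field and let A be a finite-dimensional unital associative k-algebra equipped with a bilinear form ⟨-,-⟩ : A × A → k which is invariant (⟨a · b, c⟩ = ⟨a, b · c⟩ for all a, b, c ∈ A) and nondegenerate. Then there exist linear maps Δ : A → A ⊗ A and ε : A → k with ε(a) = ⟨a, 1⟩ for all a, such that (A, μ, Δ, ε) is a Frobenius algebra in the full sense, i.e. Δ is coassociative, ε is a counit for Δ, and the Frobenius condition (μ ⊗ id) ∘ (id ⊗ Δ) = Δ ∘ μ = (id ⊗ μ) ∘ (Δ ⊗ id) holds. -/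
set_option maxHeartbeats 1000000
set_option synthInstance.maxHeartbeats 400000

open TensorProduct

/-- (Economy implies full.)  A finite-dimensional unital associative
`k`-algebra `A` with an invariant nondegenerate bilinear form `B` admits a coproduct
`Δ` and a counit `ε` (with `ε a = B a 1`) making `(A, μ, Δ, ε)` a Frobenius algebra
in the full sense. -/
theorem frobenius_of_invariant_nondegenerate_pairing
    (k A : Type*) [Field k] [Ring A] [Algebra k A] [FiniteDimensional k A]
    (B : A →ₗ[k] A →ₗ[k] k)
    (hinv : ∀ a b c : A, B (a * b) c = B a (b * c))
    (hnd_left : ∀ a : A, (∀ b : A, B a b = 0) → a = 0)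
    (hnd_right : ∀ b : A, (∀ a : A, B a b = 0) → b = 0) :
    ∃ (Δ : A →ₗ[k] A ⊗[k] A) (ε : A →ₗ[k] k),
      (∀ a : A, ε a = B a 1) ∧
      ((TensorProduct.assoc k A A A).toLinearMap ∘ₗ LinearMap.rTensor A Δ ∘ₗ Δ =
        LinearMap.lTensor A Δ ∘ₗ Δ) ∧
      ((TensorProduct.lid k A).toLinearMap ∘ₗ LinearMap.rTensor A ε ∘ₗ Δ = LinearMap.id) ∧
      ((TensorProduct.rid k A).toLinearMap ∘ₗ LinearMap.lTensor A ε ∘ₗ Δ = LinearMap.id) ∧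
      (LinearMap.rTensor A (LinearMap.mul' k A) ∘ₗ
          (TensorProduct.assoc k A A A).symm.toLinearMap ∘ₗ LinearMap.lTensor A Δ =
        Δ ∘ₗ LinearMap.mul' k A) ∧
      (LinearMap.lTensor A (LinearMap.mul' k A) ∘ₗ
          (TensorProduct.assoc k A A A).toLinearMap ∘ₗ LinearMap.rTensor A Δ =
        Δ ∘ₗ LinearMap.mul' k A) := by
  classical
  set b := Module.finBasis k A with hb
  have hinj : Function.Injective B.flip := by
    rw [injective_iff_map_eq_zero]
    intro a ha
    exact hnd_right a fun u => congrFun (congrArg DFunLike.coe ha) u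
  have hsurj : Function.Surjective B.flip := by
    refine (LinearMap.injective_iff_surjective_of_finrank_eq_finrank ?_).mp hinj
    exact (Subspace.dual_finrank_eq (K := k) (V := A)).symm
  let R : A ≃ₗ[k] Module.Dual k A := LinearEquiv.ofBijective B.flip ⟨hinj, hsurj⟩
  let f : _ → A := fun i => R.symm (b.coord i)
  have hBf : ∀ (a : A) i, B a (f i) = b.repr a i := by
    intro a i
    have h1 : B.flip (f i) = b.coord i := R.apply_symm_apply (b.coord i)
    calc B a (f i) = B.flip (f i) a := rfl
      _ = b.coord i a := by rw [h1]
  have exp1 : ∀ a : A, ∑ i, B a (f i) • b i = a := by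
    intro a
    conv_rhs => rw [← b.sum_repr a]
    exact Finset.sum_congr rfl fun i _ => by rw [hBf]
  have exp2 : ∀ a : A, ∑ i, B (b i) a • f i = a := by
    intro a
    have key : ∀ u : A, B u (∑ i, B (b i) a • f i - a) = 0 := by
      intro u
      rw [map_sub, sub_eq_zero, map_sum]
      have h2 : B u a = ∑ i, b.repr u i • B (b i) a := by
        conv_lhs => rw [← b.sum_repr u]
        rw [map_sum, LinearMap.sum_apply]
        simp only [map_smul, LinearMap.smul_apply]
      rw [h2]
      refine Finset.sum_congr rfl fun i _ => ?_
      rw [map_smul, hBf, smul_eq_mul, smul_eq_mul, mul_comm]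
  -- conclude
    exact sub_eq_zero.mp (hnd_right _ key)
  -- the coproduct
  let Δ : A →ₗ[k] A ⊗[k] A :=
    ∑ i, (TensorProduct.mk k A A (f i)).comp (LinearMap.mulLeft k (b i))
  have hΔ : ∀ a : A, Δ a = ∑ i, f i ⊗ₜ[k] (b i * a) := by
    intro a
    simp [Δ, LinearMap.sum_apply]
  -- the swap identity
  have hΔ' : ∀ a : A, Δ a = ∑ i, (a * f i) ⊗ₜ[k] b i := by
    intro a
    rw [hΔ]
    have lhs : ∀ i, (a * f i) ⊗ₜ[k] b i
        = ∑ j, B (b j * a) (f i) • (f j ⊗ₜ[k] b i) := by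
      intro i
      conv_lhs => rw [← exp2 (a * f i)]
      rw [sum_tmul]
      refine Finset.sum_congr rfl fun j _ => ?_
      rw [hinv, smul_tmul']
    have rhs : ∀ j, f j ⊗ₜ[k] (b j * a)
        = ∑ i, B (b j * a) (f i) • (f j ⊗ₜ[k] b i) := by
      intro j
      conv_lhs => rw [← exp1 (b j * a)]
      rw [tmul_sum]
      refine Finset.sum_congr rfl fun i _ => ?_
      rw [tmul_smul]
    calc ∑ j, f j ⊗ₜ[k] (b j * a)
        = ∑ j, ∑ i, B (b j * a) (f i) • (f j ⊗ₜ[k] b i) :=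
          Finset.sum_congr rfl fun j _ => rhs j
      _ = ∑ i, ∑ j, B (b j * a) (f i) • (f j ⊗ₜ[k] b i) := Finset.sum_comm
      _ = ∑ i, (a * f i) ⊗ₜ[k] b i := (Finset.sum_congr rfl fun i _ => (lhs i).symm)
  -- the counit
  refine ⟨Δ, B.flip 1, fun a => rfl, ?_, ?_, ?_, ?_, ?_⟩
  · -- coassociativity
    ext a
    simp only [LinearMap.comp_apply, LinearEquiv.coe_coe]
    have L : (TensorProduct.assoc k A A A) ((LinearMap.rTensor A Δ) (Δ a)) =
        ∑ i, ∑ j, f j ⊗ₜ[k] ((b j * (a * f i)) ⊗ₜ[k] b i) := by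
      rw [hΔ' a, map_sum, map_sum]
      refine Finset.sum_congr rfl fun i _ => ?_
      rw [LinearMap.rTensor_tmul, hΔ (a * f i), sum_tmul, map_sum]
      exact Finset.sum_congr rfl fun j _ => by rw [assoc_tmul]
    have Rh : (LinearMap.lTensor A Δ) (Δ a) =
        ∑ j, ∑ i, f j ⊗ₜ[k] (((b j * a) * f i) ⊗ₜ[k] b i) := by
      rw [hΔ a, map_sum]
      refine Finset.sum_congr rfl fun j _ => ?_
      rw [LinearMap.lTensor_tmul, hΔ' (b j * a), tmul_sum]
    rw [L, Rh, Finset.sum_comm]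
    simp [mul_assoc]
  · -- left counit
    ext a
    simp only [LinearMap.comp_apply, LinearEquiv.coe_coe, LinearMap.id_apply]
    rw [hΔ' a, map_sum, map_sum]
    have h3 : ∀ i, (TensorProduct.lid k A)
        ((LinearMap.rTensor A (B.flip 1)) ((a * f i) ⊗ₜ[k] b i))
        = B a (f i) • b i := by
      intro i
      rw [LinearMap.rTensor_tmul, lid_tmul]
      congr 1
      show B (a * f i) 1 = B a (f i)
      rw [hinv, mul_one]
    rw [Finset.sum_congr rfl fun i _ => h3 i, exp1]
  · -- right counit
    ext a
    simp only [LinearMap.comp_apply, LinearEquiv.coe_coe, LinearMap.id_apply]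
    rw [hΔ a, map_sum, map_sum]
    have h3 : ∀ i, (TensorProduct.rid k A)
        ((LinearMap.lTensor A (B.flip 1)) (f i ⊗ₜ[k] (b i * a)))
        = B (b i) a • f i := by
      intro i
      rw [LinearMap.lTensor_tmul, rid_tmul]
      congr 1
      show B (b i * a) 1 = B (b i) a
      rw [hinv, mul_one]
    rw [Finset.sum_congr rfl fun i _ => h3 i, exp2]
  · -- Frobenius 1
    refine TensorProduct.ext' fun a c => ?_
    simp only [LinearMap.comp_apply, LinearEquiv.coe_coe]
    rw [LinearMap.lTensor_tmul, hΔ' c, tmul_sum, map_sum, map_sum,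
      LinearMap.mul'_apply, hΔ' (a * c)]
    refine Finset.sum_congr rfl fun i _ => ?_
    rw [assoc_symm_tmul, LinearMap.rTensor_tmul, LinearMap.mul'_apply, mul_assoc]
  · -- Frobenius 2
    refine TensorProduct.ext' fun a c => ?_
    simp only [LinearMap.comp_apply, LinearEquiv.coe_coe]
    rw [LinearMap.rTensor_tmul, hΔ a, sum_tmul, map_sum, map_sum,
      LinearMap.mul'_apply, hΔ (a * c)]
    refine Finset.sum_congr rfl fun i _ => ?_
    rw [assoc_tmul, LinearMap.lTensor_tmul, LinearMap.mul'_apply, mul_assoc]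
end
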